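/- For y₁, y₂ ∈ ℝ^p, the function x ↦ (y₁ − H x)ᵀ Σ⁻¹ (y₁ − H x) − (y₂ − H x)ᵀ Σ⁻¹ (y₂ − H x) is constant on ℝ^m if and only if T y₁ = T y₂. (This is the characterization by which T y is a minimal sufficient statistic for x under the likelihood 𝒩(y | H x, Σ).) -/

import Mathlib

open Matrix

private lemma key_posdef {p m : ℕ} (H : Matrix (Fin p) (Fin m) ℝ) (A : Matrix (Fin p) (Fin p) ℝ)
    (hH : LinearIndependent ℝ (fun j i => H i j)) (hA : A.PosDef) :
    (Hᵀ * A * H).PosDef := by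
  have hinj : Function.Injective H.mulVec := by
    rw [Matrix.mulVec_injective_iff]
    exact hH
  refine Matrix.PosDef.of_dotProduct_mulVec_pos ?_ (fun x hx => ?_)
  · have := (hA.posSemidef.conjTranspose_mul_mul_same H).isHermitian
    simpa using this
  · have hHx : H.mulVec x ≠ 0 := by
      intro h
      apply hx
      apply hinj
      simpa using h
    have := hA.dotProduct_mulVec_pos hHx
    simpa [star, Matrix.dotProduct_mulVec, Matrix.vecMul_vecMul, ← Matrix.mulVec_mulVec,
      Matrix.vecMul_transpose] using this

/-- `x ↦ (y₁ − Hx)ᵀΣ⁻¹(y₁ − Hx) − (y₂ − Hx)ᵀΣ⁻¹(y₂ − Hx)` is constant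
iff `T y₁ = T y₂`. -/
theorem stmt_5 {p m : ℕ} (H : Matrix (Fin p) (Fin m) ℝ) (Cov : Matrix (Fin p) (Fin p) ℝ)
    (hH : LinearIndependent ℝ (fun j i => H i j)) (hCov : Cov.PosDef)
    (T : Matrix (Fin m) (Fin p) ℝ) (hT : T = (Hᵀ * Cov⁻¹ * H)⁻¹ * Hᵀ * Cov⁻¹)
    (y₁ y₂ : Fin p → ℝ) :
    (∀ x x' : Fin m → ℝ,
        (y₁ - H.mulVec x) ⬝ᵥ Cov⁻¹.mulVec (y₁ - H.mulVec x) -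
            (y₂ - H.mulVec x) ⬝ᵥ Cov⁻¹.mulVec (y₂ - H.mulVec x) =
          (y₁ - H.mulVec x') ⬝ᵥ Cov⁻¹.mulVec (y₁ - H.mulVec x') -
            (y₂ - H.mulVec x') ⬝ᵥ Cov⁻¹.mulVec (y₂ - H.mulVec x')) ↔
      T.mulVec y₁ = T.mulVec y₂ := by
  set A := Cov⁻¹ with hAdef
  have hA : A.PosDef := hCov.inv
  have hAsymm : Aᵀ = A := hA.isHermitian
  have hG : (Hᵀ * A * H).PosDef := key_posdef H A hH hA
  set w : Fin m → ℝ := (Hᵀ * A).mulVec (y₁ - y₂) with hw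
  -- the quadratic-difference function equals c - 2 ⟪x, w⟫
  have hsym : ∀ (u : Fin p → ℝ) (z : Fin p → ℝ), u ⬝ᵥ A.mulVec z = z ⬝ᵥ A.mulVec u := by
    intro u z
    rw [Matrix.dotProduct_mulVec, ← Matrix.vecMul_transpose, hAsymm, dotProduct_comm]
  have hexp : ∀ x : Fin m → ℝ,
      (y₁ - H.mulVec x) ⬝ᵥ A.mulVec (y₁ - H.mulVec x) -
        (y₂ - H.mulVec x) ⬝ᵥ A.mulVec (y₂ - H.mulVec x) =
      y₁ ⬝ᵥ A.mulVec y₁ - y₂ ⬝ᵥ A.mulVec y₂ - 2 * (x ⬝ᵥ w) := by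
    intro x
    have hxw : x ⬝ᵥ w = (H.mulVec x) ⬝ᵥ A.mulVec (y₁ - y₂) := by
      rw [hw, ← Matrix.mulVec_mulVec, Matrix.dotProduct_mulVec, Matrix.vecMul_transpose]
    simp only [Matrix.mulVec_sub, sub_dotProduct, dotProduct_sub]
    rw [hxw]
    rw [hsym y₁ (H.mulVec x), hsym y₂ (H.mulVec x), Matrix.mulVec_sub,
      dotProduct_sub]
    ring
  constructor
  · intro hconst
    -- deduce w = 0
    have hz : ∀ x : Fin m → ℝ, x ⬝ᵥ w = 0 := by
      intro x
      have := hconst x 0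
      rw [hexp x, hexp 0] at this
      simp only [zero_dotProduct] at this
      linarith
    have hw0 : w = 0 := by
      funext i
      have := hz (Pi.single i 1)
      simpa [dotProduct, Pi.single_apply] using this
    -- T y₁ - T y₂ = (HᵀAH)⁻¹ w = 0
    have : T.mulVec y₁ - T.mulVec y₂ = (Hᵀ * A * H)⁻¹.mulVec w := by
      rw [← Matrix.mulVec_sub, hT, hw]
      simp [Matrix.mulVec_mulVec, Matrix.mul_assoc]
    have h2 : T.mulVec y₁ - T.mulVec y₂ = 0 := by rw [this, hw0, Matrix.mulVec_zero]
    exact sub_eq_zero.mp h2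
  · intro hTy x x'
    -- from T y₁ = T y₂ deduce w = 0
    have hTv : T.mulVec (y₁ - y₂) = 0 := by
      rw [Matrix.mulVec_sub, hTy, sub_self]
    have hw0 : w = 0 := by
      have := congrArg (fun v => (Hᵀ * A * H).mulVec v) hTv
      simp only [Matrix.mulVec_zero, Matrix.mulVec_mulVec] at this
      rw [hT] at this
      rw [show Hᵀ * A * H * ((Hᵀ * A * H)⁻¹ * Hᵀ * A) = Hᵀ * A by
        rw [← Matrix.mul_assoc, ← Matrix.mul_assoc,
          Matrix.mul_nonsing_inv _ (Matrix.isUnit_iff_isUnit_det _ |>.1 hG.isUnit),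
          Matrix.one_mul]] at this
      rw [hw]
      exact this
    rw [hexp x, hexp x', hw0]
    simp
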